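/- arXiv:2307.13332 — 4 statements merged into one kernel-verified Lean document; each statement's English description precedes it below -/
import Mathlib

section
/- Let Φ ∈ ℝ^{S×d}, D diagonal nonnegative, P row-stochastic, γ ∈ [0,1), r ∈ ℝ^S, and let v = (I − γP)^{-1} r. Define A = ΦᵀD(I − γP)Φ, b = ΦᵀDr, Σ = ΦᵀDΦ, and assume A and Σ are invertible. Let θ_LS = Σ^{-1}ΦᵀD v (the weighted least-squares parameter) and θ_LSTD = A^{-1}b. Setting v⊥ = v − Φθ_LS, one has θ_LS − θ_LSTD = γ A^{-1} Φᵀ D P v⊥. -/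
open Matrix

theorem stmt4 (S d : ℕ) (Φ : Matrix (Fin S) (Fin d) ℝ)
    (μ : Fin S → ℝ) (hμ : ∀ s, 0 ≤ μ s)
    (P : Matrix (Fin S) (Fin S) ℝ)
    (hP0 : ∀ i j, 0 ≤ P i j) (hP1 : ∀ i, ∑ j, P i j = 1)
    (γ : ℝ) (hγ0 : 0 ≤ γ) (hγ1 : γ < 1)
    (r : Fin S → ℝ)
    (hI : IsUnit (1 - γ • P))
    (hA : IsUnit (Φᵀ * Matrix.diagonal μ * (1 - γ • P) * Φ))
    (hSig : IsUnit (Φᵀ * Matrix.diagonal μ * Φ)) :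
    let D := Matrix.diagonal μ
    let A := Φᵀ * D * (1 - γ • P) * Φ
    let v := (1 - γ • P)⁻¹ *ᵥ r
    let θLS := (Φᵀ * D * Φ)⁻¹ *ᵥ ((Φᵀ * D) *ᵥ v)
    let θLSTD := A⁻¹ *ᵥ ((Φᵀ * D) *ᵥ r)
    let vperp := v - Φ *ᵥ θLS
    θLS - θLSTD = γ • (A⁻¹ *ᵥ ((Φᵀ * D * P) *ᵥ vperp)) := by
  intro D A v θLS θLSTD vperp
  have hAdet : IsUnit A.det := (Matrix.isUnit_iff_isUnit_det A).mp hA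
  have hIdet : IsUnit (1 - γ • P).det := (Matrix.isUnit_iff_isUnit_det _).mp hI
  have hSdet : IsUnit (Φᵀ * D * Φ).det := (Matrix.isUnit_iff_isUnit_det _).mp hSig
  have hr : (1 - γ • P) *ᵥ v = r := by
    show (1 - γ • P) *ᵥ ((1 - γ • P)⁻¹ *ᵥ r) = r
    rw [Matrix.mulVec_mulVec, Matrix.mul_nonsing_inv _ hIdet, Matrix.one_mulVec]
  have hSθ : (Φᵀ * D * Φ) *ᵥ θLS = (Φᵀ * D) *ᵥ v := by
    show (Φᵀ * D * Φ) *ᵥ ((Φᵀ * D * Φ)⁻¹ *ᵥ _) = _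
    rw [Matrix.mulVec_mulVec, Matrix.mul_nonsing_inv _ hSdet, Matrix.one_mulVec]
  have hAθ : A *ᵥ θLSTD = (Φᵀ * D) *ᵥ r := by
    show A *ᵥ (A⁻¹ *ᵥ _) = _
    rw [Matrix.mulVec_mulVec, Matrix.mul_nonsing_inv _ hAdet, Matrix.one_mulVec]
  have key : A *ᵥ (θLS - θLSTD) = γ • ((Φᵀ * D * P) *ᵥ vperp) := by
    have hAexp : A = Φᵀ * D * Φ - γ • (Φᵀ * D * P * Φ) := by
      show Φᵀ * D * (1 - γ • P) * Φ = _
      simp [Matrix.mul_sub, Matrix.sub_mul, Matrix.mul_smul, Matrix.smul_mul, Matrix.mul_assoc]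
    rw [Matrix.mulVec_sub, hAθ, hAexp, Matrix.sub_mulVec, Matrix.smul_mulVec, hSθ]
    rw [← hr]
    have : (Φᵀ * D) *ᵥ ((1 - γ • P) *ᵥ v) = (Φᵀ * D) *ᵥ v - γ • ((Φᵀ * D * P) *ᵥ v) := by
      rw [Matrix.mulVec_mulVec, Matrix.mul_sub, Matrix.mul_one, Matrix.mul_smul,
        Matrix.sub_mulVec, Matrix.smul_mulVec]
    rw [this]
    have hvperp : (Φᵀ * D * P * Φ) *ᵥ θLS = (Φᵀ * D * P) *ᵥ (Φ *ᵥ θLS) :=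
      (Matrix.mulVec_mulVec θLS (Φᵀ * D * P) Φ).symm
    rw [hvperp]
    show _ = γ • ((Φᵀ * D * P) *ᵥ (v - Φ *ᵥ θLS))
    rw [Matrix.mulVec_sub, smul_sub]
    abel
  calc θLS - θLSTD = A⁻¹ *ᵥ (A *ᵥ (θLS - θLSTD)) := by
        rw [Matrix.mulVec_mulVec, Matrix.nonsing_inv_mul _ hAdet, Matrix.one_mulVec]
    _ = γ • (A⁻¹ *ᵥ ((Φᵀ * D * P) *ᵥ vperp)) := by
        rw [key, Matrix.mulVec_smul]
end

section
/- Let Φ ∈ ℝ^{S×d} with rows of ℓ₂-norm at most 1, D the diagonal matrix of a probability distribution μ, P row-stochastic, γ ∈ [0,1), r ∈ ℝ^S, v = (I−γP)^{-1} r, A = ΦᵀD(I−γP)Φ invertible, θ_LSTD = A^{-1}ΦᵀDr, and θ_∞ any minimizer of θ ↦ ‖Φθ − v‖_∞. Then ‖Φθ_LSTD − v‖_∞ ≤ (1 + (1+γ)/σ_min(A)) · ‖Φθ_∞ − v‖_∞. -/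
open Matrix

/-- Euclidean norm of a vector in `ℝ^n`. -/
noncomputable def euclNorm {n : ℕ} (x : Fin n → ℝ) : ℝ := Real.sqrt (x ⬝ᵥ x)

/-- Minimum singular value of a square matrix: the infimum of `‖M x‖₂` over unit vectors. -/
noncomputable def sMin {n : ℕ} (M : Matrix (Fin n) (Fin n) ℝ) : ℝ :=
  sInf {r : ℝ | ∃ x : Fin n → ℝ, euclNorm x = 1 ∧ r = euclNorm (M *ᵥ x)}

/-- Sup norm of a vector. -/
noncomputable def linf {n : ℕ} (x : Fin n → ℝ) : ℝ := ⨆ i, |x i|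

lemma euclNorm_nonneg {n : ℕ} (x : Fin n → ℝ) : 0 ≤ euclNorm x := Real.sqrt_nonneg _

lemma euclNorm_eq_norm {n : ℕ} (x : Fin n → ℝ) :
    euclNorm x = ‖(WithLp.equiv 2 (Fin n → ℝ)).symm x‖ := by
  rw [EuclideanSpace.norm_eq, euclNorm, dotProduct]
  congr 1
  refine Finset.sum_congr rfl fun i _ => ?_
  simp [sq_abs, sq]

lemma euclNorm_smul {n : ℕ} (c : ℝ) (x : Fin n → ℝ) :
    euclNorm (c • x) = |c| * euclNorm x := by
  have h : (c • x) ⬝ᵥ (c • x) = c ^ 2 * (x ⬝ᵥ x) := by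
    simp [smul_dotProduct, dotProduct_smul, smul_eq_mul]; ring
  rw [euclNorm, euclNorm, h, Real.sqrt_mul (sq_nonneg c), Real.sqrt_sq_eq_abs]

lemma abs_dot_le {n : ℕ} (a b : Fin n → ℝ) : |a ⬝ᵥ b| ≤ euclNorm a * euclNorm b := by
  rw [euclNorm_eq_norm, euclNorm_eq_norm]
  have h := abs_real_inner_le_norm ((WithLp.equiv 2 (Fin n → ℝ)).symm a)
      ((WithLp.equiv 2 (Fin n → ℝ)).symm b)
  have he : (inner ℝ ((WithLp.equiv 2 (Fin n → ℝ)).symm a)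
      ((WithLp.equiv 2 (Fin n → ℝ)).symm b) : ℝ) = a ⬝ᵥ b := by
    simp [PiLp.inner_apply, dotProduct, mul_comm]
  rwa [he] at h

-- new stuff

lemma euclNorm_sum_le {n : ℕ} {ι : Type*} (t : Finset ι) (g : ι → Fin n → ℝ) :
    euclNorm (∑ s ∈ t, g s) ≤ ∑ s ∈ t, euclNorm (g s) := by
  have e := (WithLp.linearEquiv 2 ℝ (Fin n → ℝ)).symm
  have h1 : (WithLp.equiv 2 (Fin n → ℝ)).symm (∑ s ∈ t, g s)
      = ∑ s ∈ t, (WithLp.equiv 2 (Fin n → ℝ)).symm (g s) := by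
    exact map_sum (WithLp.linearEquiv 2 ℝ (Fin n → ℝ)).symm g t
  rw [euclNorm_eq_norm, h1]
  calc ‖∑ s ∈ t, (WithLp.equiv 2 (Fin n → ℝ)).symm (g s)‖
      ≤ ∑ s ∈ t, ‖(WithLp.equiv 2 (Fin n → ℝ)).symm (g s)‖ := norm_sum_le _ _
    _ = ∑ s ∈ t, euclNorm (g s) := by
        exact Finset.sum_congr rfl fun s _ => (euclNorm_eq_norm (g s)).symm

lemma euclNorm_le_sum_abs {n : ℕ} (x : Fin n → ℝ) : euclNorm x ≤ ∑ i, |x i| := by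
  have hx : x = ∑ i, (fun j => if j = i then x i else 0) := by
    funext j
    simp [Finset.sum_apply, Finset.sum_ite_eq', Finset.mem_univ]
  calc euclNorm x = euclNorm (∑ i, (fun j => if j = i then x i else 0)) := by rw [← hx]
    _ ≤ ∑ i, euclNorm (fun j => if j = i then x i else 0) := euclNorm_sum_le _ _
    _ ≤ ∑ i, |x i| := by
        refine Finset.sum_le_sum fun i _ => ?_
        have : (fun j => if j = i then x i else 0) ⬝ᵥ (fun j => if j = i then x i else 0)
            = x i * x i := by
          simp [dotProduct, ite_and]
        rw [euclNorm, this, ← abs_mul_abs_self (x i), Real.sqrt_mul_self (abs_nonneg _)]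

lemma euclNorm_mulVec_le {n m : ℕ} (B : Matrix (Fin n) (Fin m) ℝ) (z : Fin m → ℝ) :
    euclNorm (B *ᵥ z) ≤ (∑ i, euclNorm (fun j => B i j)) * euclNorm z := by
  calc euclNorm (B *ᵥ z) ≤ ∑ i, |(B *ᵥ z) i| := euclNorm_le_sum_abs _
    _ ≤ ∑ i, euclNorm (fun j => B i j) * euclNorm z :=
        Finset.sum_le_sum fun i _ => abs_dot_le _ _
    _ = (∑ i, euclNorm (fun j => B i j)) * euclNorm z := by rw [Finset.sum_mul]

lemma le_linf {n : ℕ} (x : Fin n → ℝ) (i : Fin n) : |x i| ≤ linf x := by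
  exact le_ciSup (f := fun i => |x i|) (Set.Finite.bddAbove (Set.finite_range _)) i

lemma linf_nonneg {n : ℕ} (x : Fin n → ℝ) : 0 ≤ linf x := by
  rcases Nat.eq_zero_or_pos n with h | h
  · subst h
    simp [linf, Real.iSup_of_isEmpty]
  · exact le_trans (abs_nonneg _) (le_linf x ⟨0, h⟩)

lemma linf_le {n : ℕ} {x : Fin n → ℝ} {c : ℝ} (hc : 0 ≤ c) (h : ∀ i, |x i| ≤ c) :
    linf x ≤ c := by
  rcases Nat.eq_zero_or_pos n with h0 | h0
  · subst h0; simpa [linf, Real.iSup_of_isEmpty] using hc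
  · have : Nonempty (Fin n) := ⟨⟨0, h0⟩⟩
    exact ciSup_le h

lemma sMin_nonneg {n : ℕ} (M : Matrix (Fin n) (Fin n) ℝ) : 0 ≤ sMin M :=
  Real.sInf_nonneg (by rintro r ⟨x, hx, rfl⟩; exact Real.sqrt_nonneg _)

lemma sMin_mul_le {n : ℕ} (M : Matrix (Fin n) (Fin n) ℝ) (y : Fin n → ℝ) :
    sMin M * euclNorm y ≤ euclNorm (M *ᵥ y) := by
  rcases eq_or_ne (euclNorm y) 0 with h | h
  · rw [h, mul_zero]; exact euclNorm_nonneg _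
  · have hpos : 0 < euclNorm y := lt_of_le_of_ne (euclNorm_nonneg y) (Ne.symm h)
    set c := (euclNorm y)⁻¹ with hc
    have hunit : euclNorm (c • y) = 1 := by
      rw [euclNorm_smul, abs_of_pos (inv_pos.mpr hpos), inv_mul_cancel₀ h]
    have hmem : euclNorm (M *ᵥ (c • y)) ∈
        {r : ℝ | ∃ x : Fin n → ℝ, euclNorm x = 1 ∧ r = euclNorm (M *ᵥ x)} :=
      ⟨c • y, hunit, rfl⟩
    have hbdd : BddBelow {r : ℝ | ∃ x : Fin n → ℝ, euclNorm x = 1 ∧ r = euclNorm (M *ᵥ x)} :=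
      ⟨0, by rintro r ⟨x, hx, rfl⟩; exact Real.sqrt_nonneg _⟩
    have hle : sMin M ≤ euclNorm (M *ᵥ (c • y)) := csInf_le hbdd hmem
    have hMy : euclNorm (M *ᵥ (c • y)) = c * euclNorm (M *ᵥ y) := by
      rw [mulVec_smul, euclNorm_smul, abs_of_pos (inv_pos.mpr hpos)]
    rw [hMy] at hle
    have h2 := mul_le_mul_of_nonneg_right hle hpos.le
    calc sMin M * euclNorm y ≤ c * euclNorm (M *ᵥ y) * euclNorm y := h2
      _ = euclNorm (M *ᵥ y) := by rw [hc]; field_simp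

lemma sMin_pos {n : ℕ} (hn : 0 < n) {M : Matrix (Fin n) (Fin n) ℝ} (hM : IsUnit M) :
    0 < sMin M := by
  set K := ∑ i, euclNorm (fun j => M⁻¹ i j) with hK
  have hinv : ∀ x : Fin n → ℝ, M⁻¹ *ᵥ (M *ᵥ x) = x := by
    intro x
    rw [mulVec_mulVec, Matrix.nonsing_inv_mul M ((Matrix.isUnit_iff_isUnit_det M).mp hM),
      one_mulVec]
  have hbound : ∀ x : Fin n → ℝ, euclNorm x = 1 → 1 ≤ K * euclNorm (M *ᵥ x) := by
    intro x hx
    have := euclNorm_mulVec_le M⁻¹ (M *ᵥ x)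
    rw [hinv x, hx] at this
    exact this
  have x0 : Fin n → ℝ := Pi.single ⟨0, hn⟩ 1
  have hx0 : euclNorm (Pi.single (⟨0, hn⟩ : Fin n) (1:ℝ)) = 1 := by
    have : (Pi.single (⟨0, hn⟩ : Fin n) (1:ℝ)) ⬝ᵥ (Pi.single (⟨0, hn⟩ : Fin n) (1:ℝ)) = 1 := by
      simp [dotProduct, Pi.single_apply, ite_and]
    rw [euclNorm, this, Real.sqrt_one]
  have hKpos : 0 < K := by
    have h1 := hbound _ hx0
    by_contra hle
    push_neg at hle
    nlinarith [euclNorm_nonneg (M *ᵥ Pi.single (⟨0, hn⟩ : Fin n) (1:ℝ))]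
  have hsmin : 1 / K ≤ sMin M := by
    rw [sMin]
    refine le_csInf ⟨euclNorm (M *ᵥ Pi.single (⟨0, hn⟩ : Fin n) (1:ℝ)),
      ⟨Pi.single (⟨0, hn⟩ : Fin n) (1:ℝ), hx0, rfl⟩⟩ ?_
    rintro b ⟨x, hx, rfl⟩
    rw [div_le_iff₀ hKpos]
    have h2 := hbound x hx
    have h3 : K * euclNorm (M *ᵥ x) = euclNorm (M *ᵥ x) * K := mul_comm _ _
    linarith
  have : 0 < 1 / K := one_div_pos.mpr hKpos
  linarith

lemma weighted_bound {S d : ℕ} (Φ : Matrix (Fin S) (Fin d) ℝ)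
    (hrows : ∀ i, euclNorm (fun j => Φ i j) ≤ 1)
    (μ : Fin S → ℝ) (hμ0 : ∀ s, 0 ≤ μ s) (hμ1 : ∑ s, μ s = 1) (z : Fin S → ℝ) :
    euclNorm ((Φᵀ * Matrix.diagonal μ) *ᵥ z) ≤ linf z := by
  have hw : (Φᵀ * Matrix.diagonal μ) *ᵥ z = ∑ s, (μ s * z s) • (fun j => Φ s j) := by
    funext j
    simp only [mulVec, dotProduct, Matrix.mul_diagonal, transpose_apply, Finset.sum_apply,
      Pi.smul_apply, smul_eq_mul]
    exact Finset.sum_congr rfl fun s _ => by ring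
  calc euclNorm ((Φᵀ * Matrix.diagonal μ) *ᵥ z)
      ≤ ∑ s, euclNorm ((μ s * z s) • (fun j => Φ s j)) := by
        rw [hw]; exact euclNorm_sum_le _ _
    _ = ∑ s, |μ s * z s| * euclNorm (fun j => Φ s j) :=
        Finset.sum_congr rfl fun s _ => euclNorm_smul _ _
    _ ≤ ∑ s, μ s * linf z := by
        refine Finset.sum_le_sum fun s _ => ?_
        have h1 : |μ s * z s| ≤ μ s * linf z := by
          rw [abs_mul, abs_of_nonneg (hμ0 s)]
          exact mul_le_mul_of_nonneg_left (le_linf z s) (hμ0 s)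
        calc |μ s * z s| * euclNorm (fun j => Φ s j) ≤ |μ s * z s| * 1 :=
              mul_le_mul_of_nonneg_left (hrows s) (abs_nonneg _)
          _ = |μ s * z s| := mul_one _
          _ ≤ μ s * linf z := h1
    _ = linf z := by rw [← Finset.sum_mul, hμ1, one_mul]

lemma B_bound {S : ℕ} (P : Matrix (Fin S) (Fin S) ℝ)
    (hP0 : ∀ i j, 0 ≤ P i j) (hP1 : ∀ i, ∑ j, P i j = 1)
    {γ : ℝ} (hγ0 : 0 ≤ γ) (δ : Fin S → ℝ) :
    linf ((1 - γ • P) *ᵥ δ) ≤ (1 + γ) * linf δ := by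
  have hL := linf_nonneg δ
  refine linf_le (by nlinarith) fun i => ?_
  have hval : ((1 - γ • P) *ᵥ δ) i = δ i - γ * ((P *ᵥ δ) i) := by
    rw [sub_mulVec, one_mulVec, Matrix.smul_mulVec]
    simp
  have hPδ : |(P *ᵥ δ) i| ≤ linf δ := by
    calc |(P *ᵥ δ) i| = |∑ j, P i j * δ j| := rfl
      _ ≤ ∑ j, |P i j * δ j| := Finset.abs_sum_le_sum_abs _ _
      _ ≤ ∑ j, P i j * linf δ := by
          refine Finset.sum_le_sum fun j _ => ?_
          rw [abs_mul, abs_of_nonneg (hP0 i j)]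
          exact mul_le_mul_of_nonneg_left (le_linf δ j) (hP0 i j)
      _ = linf δ := by rw [← Finset.sum_mul, hP1, one_mul]
  rw [hval]
  have h1 := le_linf δ i
  have h2 := abs_abs (δ i)
  have htri : |δ i - γ * (P *ᵥ δ) i| ≤ |δ i| + |γ * (P *ᵥ δ) i| := by
    rw [sub_eq_add_neg]
    exact (abs_add_le _ _).trans (by rw [abs_neg])
  rw [abs_mul, abs_of_nonneg hγ0] at htri
  nlinarith [abs_nonneg ((P *ᵥ δ) i)]

theorem stmt12 (S d : ℕ) (Φ : Matrix (Fin S) (Fin d) ℝ)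
    (hrows : ∀ i, Real.sqrt (∑ j, (Φ i j) ^ 2) ≤ 1)
    (μ : Fin S → ℝ) (hμ0 : ∀ s, 0 ≤ μ s) (hμ1 : ∑ s, μ s = 1)
    (P : Matrix (Fin S) (Fin S) ℝ)
    (hP0 : ∀ i j, 0 ≤ P i j) (hP1 : ∀ i, ∑ j, P i j = 1)
    (γ : ℝ) (hγ0 : 0 ≤ γ) (hγ1 : γ < 1)
    (r : Fin S → ℝ)
    (hI : IsUnit (1 - γ • P))
    (hA : IsUnit (Φᵀ * Matrix.diagonal μ * (1 - γ • P) * Φ))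
    (θinf : Fin d → ℝ)
    (hmin : ∀ θ : Fin d → ℝ,
      linf (Φ *ᵥ θinf - (1 - γ • P)⁻¹ *ᵥ r) ≤ linf (Φ *ᵥ θ - (1 - γ • P)⁻¹ *ᵥ r)) :
    let D := Matrix.diagonal μ
    let A := Φᵀ * D * (1 - γ • P) * Φ
    let v := (1 - γ • P)⁻¹ *ᵥ r
    let θLSTD := A⁻¹ *ᵥ ((Φᵀ * D) *ᵥ r)
    linf (Φ *ᵥ θLSTD - v) ≤ (1 + (1 + γ) / sMin A) * linf (Φ *ᵥ θinf - v) := by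
  intro D A v θLSTD
  have hrows' : ∀ i, euclNorm (fun j => Φ i j) ≤ 1 := by
    intro i
    have h := hrows i
    rw [euclNorm]
    convert h using 2
    simp [dotProduct, pow_two]
  rcases Nat.eq_zero_or_pos d with hd | hd
  · subst hd
    have hθ : θLSTD = θinf := Subsingleton.elim _ _
    rw [hθ]
    have h1 : 0 ≤ (1 + γ) / sMin A := div_nonneg (by linarith) (sMin_nonneg A)
    nlinarith [linf_nonneg (Φ *ᵥ θinf - v)]
  · have hdetB : IsUnit (1 - γ • P).det := (Matrix.isUnit_iff_isUnit_det _).mp hI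
    have hdetA : IsUnit A.det := (Matrix.isUnit_iff_isUnit_det _).mp hA
    have hBv : (1 - γ • P) *ᵥ v = r := by
      show (1 - γ • P) *ᵥ ((1 - γ • P)⁻¹ *ᵥ r) = r
      rw [mulVec_mulVec, Matrix.mul_nonsing_inv _ hdetB, one_mulVec]
    set δ := Φ *ᵥ θinf - v with hδ
    set w := (Φᵀ * D) *ᵥ ((1 - γ • P) *ᵥ δ) with hw
    set u := A⁻¹ *ᵥ w with hu
    have hkey : (Φᵀ * D) *ᵥ r = A *ᵥ θinf - w := by
      have h1 : A *ᵥ θinf = (Φᵀ * D * (1 - γ • P)) *ᵥ (Φ *ᵥ θinf) := by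
        rw [mulVec_mulVec]
      have h2 : w = (Φᵀ * D * (1 - γ • P)) *ᵥ δ := by rw [hw, mulVec_mulVec]
      rw [h1, h2, ← Matrix.mulVec_sub]
      have h3 : Φ *ᵥ θinf - δ = v := by rw [hδ]; abel
      rw [h3, ← hBv, mulVec_mulVec]
    have hθL : θLSTD = θinf - u := by
      show A⁻¹ *ᵥ ((Φᵀ * D) *ᵥ r) = θinf - u
      rw [hkey, Matrix.mulVec_sub, ← hu, mulVec_mulVec,
        Matrix.nonsing_inv_mul _ hdetA, one_mulVec]
    have hgoal : Φ *ᵥ θLSTD - v = δ - Φ *ᵥ u := by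
      rw [hθL, Matrix.mulVec_sub, hδ]; abel
    have hAu : A *ᵥ u = w := by
      rw [hu, mulVec_mulVec, Matrix.mul_nonsing_inv _ hdetA, one_mulVec]
    have hwbound : euclNorm w ≤ (1 + γ) * linf δ :=
      le_trans (weighted_bound Φ hrows' μ hμ0 hμ1 _) (B_bound P hP0 hP1 hγ0 δ)
    have hspos : 0 < sMin A := sMin_pos hd hA
    have hub : euclNorm u ≤ (1 + γ) * linf δ / sMin A := by
      rw [le_div_iff₀ hspos]
      have h4 := sMin_mul_le A u
      rw [hAu] at h4
      nlinarith [euclNorm_nonneg u]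
    have hfinal : linf (δ - Φ *ᵥ u) ≤ linf δ + euclNorm u := by
      refine linf_le (by nlinarith [linf_nonneg δ, euclNorm_nonneg u]) fun i => ?_
      have htri : |(δ - Φ *ᵥ u) i| ≤ |δ i| + |(Φ *ᵥ u) i| := by
        have : (δ - Φ *ᵥ u) i = δ i - (Φ *ᵥ u) i := rfl
        rw [this, sub_eq_add_neg]
        exact (abs_add_le _ _).trans (by rw [abs_neg])
      have hrow : |(Φ *ᵥ u) i| ≤ euclNorm u := by
        have h5 := abs_dot_le (fun j => Φ i j) u
        have h6 : euclNorm (fun j => Φ i j) * euclNorm u ≤ 1 * euclNorm u :=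
          mul_le_mul_of_nonneg_right (hrows' i) (euclNorm_nonneg u)
        calc |(Φ *ᵥ u) i| = |(fun j => Φ i j) ⬝ᵥ u| := rfl
          _ ≤ euclNorm (fun j => Φ i j) * euclNorm u := h5
          _ ≤ 1 * euclNorm u := h6
          _ = euclNorm u := one_mul _
      have h7 := le_linf δ i
      linarith
    rw [hgoal]
    calc linf (δ - Φ *ᵥ u) ≤ linf δ + euclNorm u := hfinal
      _ ≤ linf δ + (1 + γ) * linf δ / sMin A := by linarith
      _ = (1 + (1 + γ) / sMin A) * linf δ := by field_simp
end

section
/- Let D be the diagonal matrix of a distribution μ on S states, Φ ∈ ℝ^{S×d} with Σ = ΦᵀDΦ invertible, P row-stochastic, and Π_μ = ΦΣ^{-1}ΦᵀD. Then the μ-weighted operator norm ‖Π_μ P‖_μ := sup{‖Π_μ P v‖_μ : ‖v‖_μ = 1} is finite if and only if for every state s' with μ(s') = 0, Σ_s μ(s)·P(s,s')·φ(s) = 0 (the zero vector in ℝ^d). -/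
open Matrix

theorem stmt16 (S d : ℕ) (Φ : Matrix (Fin S) (Fin d) ℝ)
    (μ : Fin S → ℝ) (hμ0 : ∀ s, 0 ≤ μ s) (hμ1 : ∑ s, μ s = 1)
    (P : Matrix (Fin S) (Fin S) ℝ)
    (hP0 : ∀ i j, 0 ≤ P i j) (hP1 : ∀ i, ∑ j, P i j = 1)
    (hSig : IsUnit (Φᵀ * Matrix.diagonal μ * Φ)) :
    let D := Matrix.diagonal μ
    let Pr := Φ * (Φᵀ * D * Φ)⁻¹ * Φᵀ * D
    let nμ : (Fin S → ℝ) → ℝ := fun v => Real.sqrt (∑ s, μ s * (v s) ^ 2)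
    (∃ C : ℝ, ∀ v : Fin S → ℝ, nμ ((Pr * P) *ᵥ v) ≤ C * nμ v) ↔
      (∀ s' : Fin S, μ s' = 0 → ∀ j : Fin d, ∑ s, μ s * P s s' * Φ s j = 0) := by
  intro D Pr nμ
  have hD : D = Matrix.diagonal μ := rfl
  have hPr : Pr = Φ * (Φᵀ * D * Φ)⁻¹ * Φᵀ * D := rfl
  have hn : ∀ v, nμ v = Real.sqrt (∑ s, μ s * v s ^ 2) := fun _ => rfl
  set M := Pr * P with hM
  have hinv : (Φᵀ * D * Φ) * (Φᵀ * D * Φ)⁻¹ = 1 :=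
    Matrix.mul_nonsing_inv _ ((Matrix.isUnit_iff_isUnit_det _).mp hSig)
  have hent : ∀ (A : Matrix (Fin S) (Fin S) ℝ) (k : Fin d) (t : Fin S),
      (Φᵀ * D * A) k t = ∑ s, Φ s k * (μ s * A s t) := by
    intro A k t
    rw [Matrix.mul_assoc, hD, Matrix.mul_apply]
    simp only [Matrix.diagonal_mul, Matrix.transpose_apply]
  constructor
  · rintro ⟨C, hC⟩ s' hs' j
    have h1 := hC (Pi.single s' 1)
    have hnv : nμ (Pi.single s' 1) = 0 := by
      rw [hn]
      have : ∑ s, μ s * (Pi.single s' 1 : Fin S → ℝ) s ^ 2 = 0 := by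
        refine Finset.sum_eq_zero fun s _ => ?_
        rcases eq_or_ne s s' with rfl | hne
        · simp [hs']
        · simp [Pi.single_eq_of_ne hne]
      rw [this, Real.sqrt_zero]
    rw [hnv, mul_zero] at h1
    have hsum0 : ∑ s, μ s * (M *ᵥ Pi.single s' 1) s ^ 2 = 0 := by
      have h2 : Real.sqrt (∑ s, μ s * (M *ᵥ Pi.single s' 1) s ^ 2) = 0 :=
        le_antisymm (by rw [← hn]; exact h1) (Real.sqrt_nonneg _)
      have hnn : 0 ≤ ∑ s, μ s * (M *ᵥ Pi.single s' 1) s ^ 2 :=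
        Finset.sum_nonneg fun s _ => mul_nonneg (hμ0 s) (sq_nonneg _)
      nlinarith [Real.sq_sqrt hnn, h2]
    have hz : ∀ s, μ s * M s s' = 0 := by
      intro s
      have := (Finset.sum_eq_zero_iff_of_nonneg
        (fun s _ => mul_nonneg (hμ0 s) (sq_nonneg _))).mp hsum0 s (Finset.mem_univ s)
      have hms : μ s * M s s' ^ 2 = 0 := by simpa using this
      rcases mul_eq_zero.mp hms with h | h
      · rw [h, zero_mul]
      · rw [pow_eq_zero_iff (by norm_num) |>.mp h, mul_zero]
    have hmat : Φᵀ * D * M = Φᵀ * D * P := by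
      rw [hM, hPr]
      simp only [← Matrix.mul_assoc]
      rw [hinv, Matrix.one_mul]
    have hjs := congrFun (congrFun hmat j) s'
    have hL : (Φᵀ * D * M) j s' = 0 := by
      rw [hent M j s']
      exact Finset.sum_eq_zero fun s _ => by rw [hz s, mul_zero]
    have hR : (Φᵀ * D * P) j s' = ∑ s, μ s * P s s' * Φ s j := by
      rw [hent P j s']
      exact Finset.sum_congr rfl fun s _ => by ring
    rw [← hR, ← hjs, hL]
  · intro h
    have hcolp : ∀ s', μ s' = 0 → ∀ k, (Φᵀ * D * P) k s' = 0 := by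
      intro s' hs' k
      rw [hent P k s']
      calc ∑ s, Φ s k * (μ s * P s s') = ∑ s, μ s * P s s' * Φ s k :=
            Finset.sum_congr rfl fun s _ => by ring
        _ = 0 := h s' hs' k
    have hcol : ∀ s', μ s' = 0 → ∀ i, M i s' = 0 := by
      intro s' hs' i
      have hMe : M = (Φ * (Φᵀ * D * Φ)⁻¹) * (Φᵀ * D * P) := by
        rw [hM, hPr]; simp only [Matrix.mul_assoc]
      rw [hMe, Matrix.mul_apply]
      refine Finset.sum_eq_zero fun k _ => ?_
      rw [hcolp s' hs' k, mul_zero]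
    set g : Fin S → ℝ := fun s => if μ s = 0 then 0 else (μ s)⁻¹ with hg
    have hg0 : ∀ s, 0 ≤ g s := by
      intro s
      rw [hg]
      dsimp only
      split
      · exact le_refl 0
      · exact inv_nonneg.mpr (hμ0 s)
    set K : Fin S → ℝ := fun i => ∑ s', M i s' ^ 2 * g s' with hK
    have hK0 : ∀ i, 0 ≤ K i := fun i =>
      Finset.sum_nonneg fun s _ => mul_nonneg (sq_nonneg _) (hg0 s)
    have hCK : 0 ≤ ∑ i, μ i * K i :=
      Finset.sum_nonneg fun i _ => mul_nonneg (hμ0 i) (hK0 i)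
    refine ⟨Real.sqrt (∑ i, μ i * K i), fun v => ?_⟩
    set Q : ℝ := ∑ s, μ s * v s ^ 2 with hQ
    have hQ0 : 0 ≤ Q := Finset.sum_nonneg fun s _ => mul_nonneg (hμ0 s) (sq_nonneg _)
    have key : ∀ i, (M *ᵥ v) i ^ 2 ≤ K i * Q := by
      intro i
      have hrw : (M *ᵥ v) i = ∑ s', (M i s' * Real.sqrt (g s')) * (Real.sqrt (μ s') * v s') := by
        simp only [Matrix.mulVec, dotProduct]
        refine Finset.sum_congr rfl fun s' _ => ?_
        rcases eq_or_ne (μ s') 0 with h0 | h0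
        · rw [hcol s' h0 i]; ring
        · have hgval : g s' = (μ s')⁻¹ := by rw [hg]; simp [h0]
          have : Real.sqrt (g s') * Real.sqrt (μ s') = 1 := by
            rw [← Real.sqrt_mul (hg0 s'), hgval, inv_mul_cancel₀ h0, Real.sqrt_one]
          calc M i s' * v s' = M i s' * v s' * (Real.sqrt (g s') * Real.sqrt (μ s')) := by
                rw [this, mul_one]
            _ = (M i s' * Real.sqrt (g s')) * (Real.sqrt (μ s') * v s') := by ring
      rw [hrw]
      calc (∑ s', (M i s' * Real.sqrt (g s')) * (Real.sqrt (μ s') * v s')) ^ 2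
          ≤ (∑ s', (M i s' * Real.sqrt (g s')) ^ 2) * (∑ s', (Real.sqrt (μ s') * v s') ^ 2) :=
            Finset.sum_mul_sq_le_sq_mul_sq _ _ _
        _ = K i * Q := by
            rw [hK, hQ]
            congr 1
            · refine Finset.sum_congr rfl fun s' _ => ?_
              rw [mul_pow, Real.sq_sqrt (hg0 s')]
            · refine Finset.sum_congr rfl fun s' _ => ?_
              rw [mul_pow, Real.sq_sqrt (hμ0 s')]
    rw [hn, hn, ← hQ]
    calc Real.sqrt (∑ s, μ s * (M *ᵥ v) s ^ 2)
        ≤ Real.sqrt ((∑ i, μ i * K i) * Q) := by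
          apply Real.sqrt_le_sqrt
          rw [Finset.sum_mul]
          refine Finset.sum_le_sum fun i _ => ?_
          rw [mul_assoc]
          exact mul_le_mul_of_nonneg_left (key i) (hμ0 i)
      _ = Real.sqrt (∑ i, μ i * K i) * Real.sqrt Q := Real.sqrt_mul hCK Q
end

section
/- Let γ ∈ [0.7, 1), y ∈ [0, 1−γ], and α = (−γ + √(γ² + 4y))/(2(1−γ)). Then 0 ≤ α ≤ 1, α(1−γ)(α(1−γ) + γ) = y, and 1/(α(1−γ)) ≥ γ/y + 1/2 (interpreting the left side as +∞ when y = 0 and the inequality over extended reals, or restricting to y > 0). -/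
theorem stmt19 (γ y : ℝ) (hγ0 : 0.7 ≤ γ) (hγ1 : γ < 1) (hy0 : 0 < y) (hy1 : y ≤ 1 - γ) :
    let α := (-γ + Real.sqrt (γ ^ 2 + 4 * y)) / (2 * (1 - γ))
    0 ≤ α ∧ α ≤ 1 ∧ α * (1 - γ) * (α * (1 - γ) + γ) = y ∧
      1 / (α * (1 - γ)) ≥ γ / y + 1 / 2 := by
  intro α
  set s := Real.sqrt (γ ^ 2 + 4 * y) with hs
  have h1γ : (0:ℝ) < 1 - γ := by linarith
  have hsnn : 0 ≤ s := Real.sqrt_nonneg _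
  have hs2 : s ^ 2 = γ ^ 2 + 4 * y := Real.sq_sqrt (by nlinarith)
  have hsγ : γ < s := by nlinarith
  have hsle : s ≤ 2 - γ := by nlinarith
  have hα : α * (1 - γ) = (s - γ) / 2 := by
    show (-γ + s) / (2 * (1 - γ)) * (1 - γ) = (s - γ) / 2
    field_simp
    ring
  set t := (s - γ) / 2 with ht
  have ht0 : 0 < t := by simp [ht]; linarith
  have htle : t ≤ 1 - γ := by simp [ht]; linarith
  have hty : t * (t + γ) = y := by simp only [ht]; nlinarith
  refine ⟨?_, ?_, ?_, ?_⟩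
  · apply div_nonneg (by linarith) (by linarith)
  · rw [div_le_one (by linarith)]; linarith
  · rw [hα]; exact hty
  · rw [hα, ge_iff_le, ← sub_nonneg]
    have : 1 / t - (γ / y + 1 / 2) = (2 - (t + γ)) / (2 * (t + γ)) := by
      rw [← hty]; field_simp; ring
    rw [this]
    apply div_nonneg (by linarith) (by nlinarith)
end
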